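/- For every index i with N/2+1 ≤ i ≤ N one has Θ_i ≤ 2·max{σ/α, 1}·(ψ(1 − t_i) − ψ(1 − t_{i−1})); in particular each Θ_i is bounded by a fixed multiple (depending only on σ/α) of the increment of the mesh characterizing function ψ over the corresponding subinterval. -/

import Mathlib

lemma key_min_ineq (c d : ℝ) (hc : 0 < c) (hd : 0 ≤ d) :
    min (c * d) 1 ≤ 2 * max c 1 * (1 - Real.exp (-d)) := by
  have h1 : min (c * d) 1 ≤ max c 1 * min d 1 := by
    rcases le_or_gt d 1 with h | h
    · calc min (c * d) 1 ≤ c * d := min_le_left _ _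
        _ ≤ max c 1 * min d 1 := by
          rw [min_eq_left h]
          exact mul_le_mul_of_nonneg_right (le_max_left _ _) hd
    · calc min (c * d) 1 ≤ 1 := min_le_right _ _
        _ ≤ max c 1 * min d 1 := by
          rw [min_eq_right h.le, mul_one]; exact le_max_right _ _
  have h2 : min d 1 ≤ 2 * (1 - Real.exp (-d)) := by
    rcases le_or_gt d 1 with h | h
    · rw [min_eq_left h]
      have he : Real.exp (-d) ≤ 1 / (1 + d) := by
        rw [le_div_iff₀ (by linarith : (0:ℝ) < 1 + d)]
        have h1 := Real.add_one_le_exp d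
        have h2 : Real.exp (-d) * Real.exp d = 1 := by rw [← Real.exp_add]; simp
        nlinarith [Real.exp_pos (-d)]
      have : 1 / (1 + d) ≤ 1 - d / 2 := by
        rw [div_le_iff₀ (by linarith)]
        nlinarith
      nlinarith
    · rw [min_eq_right h.le]
      have he : Real.exp (-d) ≤ Real.exp (-1) := Real.exp_le_exp.2 (by linarith)
      have h2 : (2:ℝ) ≤ Real.exp 1 := by linarith [Real.add_one_le_exp 1]
      have : Real.exp (-1) ≤ 1/2 := by
        rw [Real.exp_neg]
        rw [inv_le_comm₀ (Real.exp_pos _) (by norm_num)]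
        linarith
      linarith
  calc min (c * d) 1 ≤ max c 1 * min d 1 := h1
    _ ≤ max c 1 * (2 * (1 - Real.exp (-d))) :=
        mul_le_mul_of_nonneg_left h2 (le_trans zero_le_one (le_max_right _ _))
    _ = 2 * max c 1 * (1 - Real.exp (-d)) := by ring



/-- For every index `i` with `N/2+1 ≤ i ≤ N` one has
`Θ_i ≤ 2·max{σ/α, 1}·(ψ(1 − t_i) − ψ(1 − t_{i−1}))`, where `t_i = i/N`,
`h_i = (σε/α)·(φ(1−t_{i−1}) − φ(1−t_i))`, `Θ_i = min{h_i/ε, 1}·ψ(1−t_i)`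
and `ψ = exp(−φ)`. -/
theorem theta_bound_by_psi_increment
    (α σ ε : ℝ) (hα : 0 < α) (hσ : 0 < σ) (hε : 0 < ε)
    (N : ℕ) (hN4 : 4 ≤ N) (hNeven : Even N)
    (φ φ' : ℝ → ℝ)
    (hφderiv : ∀ t ∈ Set.Icc (0:ℝ) (1/2), HasDerivAt φ (φ' t) t)
    (hφ'cont : ContinuousOn φ' (Set.Icc (0:ℝ) (1/2)))
    (hφ0 : φ 0 = 0)
    (hφ'pos : ∀ t ∈ Set.Icc (0:ℝ) (1/2), 0 < φ' t)
    (ψ : ℝ → ℝ) (hψ : ∀ t, ψ t = Real.exp (-φ t))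
    (i : ℕ) (hi1 : N / 2 + 1 ≤ i) (hi2 : i ≤ N) :
    min ((σ * ε / α) * (φ (1 - ((i:ℝ) - 1) / N) - φ (1 - (i:ℝ) / N)) / ε) 1
        * ψ (1 - (i:ℝ) / N)
      ≤ 2 * max (σ / α) 1 * (ψ (1 - (i:ℝ) / N) - ψ (1 - ((i:ℝ) - 1) / N)) := by
  have hN0 : (0:ℝ) < N := by positivity
  set a : ℝ := 1 - (i:ℝ) / N with ha
  set b : ℝ := 1 - ((i:ℝ) - 1) / N with hb
  have h2i : N + 2 ≤ 2 * i := by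
    have hhalf : N / 2 * 2 = N := Nat.div_mul_cancel hNeven.two_dvd
    omega
  have hiN : (i:ℝ) ≤ N := by exact_mod_cast hi2
  have h2i' : (N:ℝ) + 2 ≤ 2 * i := by exact_mod_cast h2i
  have haI : a ∈ Set.Icc (0:ℝ) (1/2) := by
    constructor
    · rw [ha]; rw [sub_nonneg, div_le_one hN0]; exact hiN
    · have : (1:ℝ)/2 ≤ (i:ℝ)/N := by rw [le_div_iff₀ hN0]; nlinarith
      rw [ha]; linarith
  have hbI : b ∈ Set.Icc (0:ℝ) (1/2) := by
    constructor
    · rw [hb, sub_nonneg, div_le_one hN0]; linarith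
    · have : (1:ℝ)/2 ≤ ((i:ℝ)-1)/N := by rw [le_div_iff₀ hN0]; nlinarith
      rw [hb]; linarith
  have hab : a < b := by
    have : ((i:ℝ)-1)/N < (i:ℝ)/N := by
      apply div_lt_div_of_pos_right (by linarith) hN0
    rw [ha, hb]; linarith
  -- monotonicity of φ
  have hcont : ContinuousOn φ (Set.Icc (0:ℝ) (1/2)) :=
    fun t ht => (hφderiv t ht).continuousAt.continuousWithinAt
  have hmono : StrictMonoOn φ (Set.Icc (0:ℝ) (1/2)) := by
    apply strictMonoOn_of_deriv_pos (convex_Icc _ _) hcont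
    intro x hx
    rw [interior_Icc] at hx
    have hx' : x ∈ Set.Icc (0:ℝ) (1/2) := Set.mem_Icc_of_Ioo hx
    rw [(hφderiv x hx').deriv]
    exact hφ'pos x hx'
  set d : ℝ := φ b - φ a with hd
  have hd0 : 0 ≤ d := by
    have := hmono haI hbI hab
    rw [hd]; linarith
  have hE : ψ a = Real.exp (-φ a) := hψ a
  have hEb : ψ b = Real.exp (-φ b) := hψ b
  have hsplit : Real.exp (-φ b) = Real.exp (-φ a) * Real.exp (-d) := by
    rw [← Real.exp_add]; congr 1; rw [hd]; ring
  have hc : (0:ℝ) < σ / α := div_pos hσ hα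
  have hcd : (σ * ε / α) * d / ε = (σ / α) * d := by
    field_simp
  have hkey := key_min_ineq (σ / α) d hc hd0
  have hEpos : 0 < Real.exp (-φ a) := Real.exp_pos _
  calc min ((σ * ε / α) * (φ b - φ a) / ε) 1 * ψ a
      = min ((σ / α) * d) 1 * Real.exp (-φ a) := by rw [hE, ← hd, hcd]
    _ ≤ (2 * max (σ / α) 1 * (1 - Real.exp (-d))) * Real.exp (-φ a) :=
        mul_le_mul_of_nonneg_right hkey hEpos.le
    _ = 2 * max (σ / α) 1 * (ψ a - ψ b) := by
        rw [hE, hEb, hsplit]; ring
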